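/- arXiv:1410.2084 — 2 statements merged into one kernel-verified Lean document; each statement's English description precedes it below -/
import Mathlib

section
/- For the real Ish arrangement Ish_ℓ with base chamber B = {x_1 < x_ℓ < x_{ℓ−1} < … < x_2}, we have Σ_{C ∈ Ch(Ish_ℓ)} t^{d(B,C)} = (1 + t + t^2 + … + t^ℓ)^{ℓ−1}. -/
noncomputable section

variable {V : Type*} [TopologicalSpace V] [AddCommGroup V] [Module ℝ V]

/-- Complement of an affine arrangement given by pairs (linear form, constant). -/
def arrCompl (A : Set ((V →ₗ[ℝ] ℝ) × ℝ)) : Set V := {v | ∀ p ∈ A, p.1 v ≠ p.2}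

/-- The chambers: connected components of the complement. -/
def chambers (A : Set ((V →ₗ[ℝ] ℝ) × ℝ)) : Set (Set V) :=
  {C | ∃ x ∈ arrCompl A, C = connectedComponentIn (arrCompl A) x}

/-- The hyperplane `p.1 = p.2` separates `B` from `C`. -/
def Separates (p : (V →ₗ[ℝ] ℝ) × ℝ) (B C : Set V) : Prop :=
  ((∀ v ∈ B, p.1 v < p.2) ∧ (∀ v ∈ C, p.2 < p.1 v)) ∨
    ((∀ v ∈ B, p.2 < p.1 v) ∧ (∀ v ∈ C, p.1 v < p.2))

/-- The number of hyperplanes of `A` separating `B` from `C`. -/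
def sepCount (A : Set ((V →ₗ[ℝ] ℝ) × ℝ)) (B C : Set V) : ℕ :=
  {p ∈ A | Separates p B C}.ncard

/-- coordinate projection -/
def pr {ι : Type*} (o : ι) : ((ι → ℝ) →ₗ[ℝ] ℝ) := LinearMap.proj o

/-- The Ish arrangement in `ℝ^ℓ`: hyperplanes `x_i - x_j = 0` and `x_1 - x_j = i`
for `1 ≤ i < j ≤ ℓ` (zero-based coordinates, so constants are `i+1`). -/
def ishArr (ℓ : ℕ) : Set (((Fin ℓ → ℝ) →ₗ[ℝ] ℝ) × ℝ) :=
  {p | ∃ i j : Fin ℓ, i < j ∧ p = (pr i - pr j, 0)} ∪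
    {p | ∃ i j : Fin ℓ, i < j ∧ p = (pr ⟨0, i.pos⟩ - pr j, ((i : ℕ) + 1 : ℝ))}

namespace Ish

attribute [local instance] Classical.propDecidable

variable {n : ℕ}

/-- The cell (sign region) of a point. -/
def cell (A : Set (((Fin n → ℝ) →ₗ[ℝ] ℝ) × ℝ)) (v : Fin n → ℝ) : Set (Fin n → ℝ) :=
  {w | ∀ p ∈ A, (p.1 w < p.2 ↔ p.1 v < p.2) ∧ (p.2 < p.1 w ↔ p.2 < p.1 v)}

lemma mem_cell_self (A : Set (((Fin n → ℝ) →ₗ[ℝ] ℝ) × ℝ)) (v : Fin n → ℝ) :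
    v ∈ cell A v := fun _ _ => ⟨Iff.rfl, Iff.rfl⟩

lemma cell_subset_compl {A : Set (((Fin n → ℝ) →ₗ[ℝ] ℝ) × ℝ)} {v : Fin n → ℝ}
    (hv : v ∈ arrCompl A) : cell A v ⊆ arrCompl A := by
  intro w hw p hp
  have h := hw p hp
  have hv' := hv p hp
  rcases lt_trichotomy (p.1 v) p.2 with h1 | h1 | h1
  · exact ne_of_lt (h.1.2 h1)
  · exact absurd h1 hv'
  · exact ne_of_gt (h.2.2 h1)

lemma cell_eq_of_mem {A : Set (((Fin n → ℝ) →ₗ[ℝ] ℝ) × ℝ)} {v w : Fin n → ℝ}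
    (hw : w ∈ cell A v) : cell A w = cell A v := by
  ext u
  constructor <;> intro hu p hp
  · exact ⟨(hu p hp).1.trans (hw p hp).1, (hu p hp).2.trans (hw p hp).2⟩
  · exact ⟨(hu p hp).1.trans (hw p hp).1.symm, (hu p hp).2.trans (hw p hp).2.symm⟩

/-- For a point of the complement, the cell is the intersection of open halfspaces. -/
lemma cell_eq_iInter {A : Set (((Fin n → ℝ) →ₗ[ℝ] ℝ) × ℝ)} {v : Fin n → ℝ}
    (hv : v ∈ arrCompl A) :
    cell A v = ⋂ p ∈ A, (if p.1 v < p.2 then {w | p.1 w < p.2} else {w | p.2 < p.1 w}) := by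
  ext w
  simp only [cell, Set.mem_setOf_eq, Set.mem_iInter]
  constructor
  · intro h p hp
    rcases lt_trichotomy (p.1 v) p.2 with h1 | h1 | h1
    · simp only [if_pos h1]; exact (h p hp).1.2 h1
    · exact absurd h1 (hv p hp)
    · simp only [if_neg (not_lt.2 h1.le)]; exact (h p hp).2.2 h1
  · intro h p hp
    have hp' := h p hp
    rcases lt_trichotomy (p.1 v) p.2 with h1 | h1 | h1
    · rw [if_pos h1] at hp'
      exact ⟨⟨fun _ => h1, fun _ => hp'⟩, ⟨fun hh => absurd (hh.trans hp') (lt_irrefl _),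
        fun hh => absurd (h1.trans hh) (lt_irrefl _)⟩⟩
    · exact absurd h1 (hv p hp)
    · rw [if_neg (not_lt.2 h1.le)] at hp'
      exact ⟨⟨fun hh => absurd hp' hh.asymm, fun hh => absurd h1 hh.asymm⟩,
        ⟨fun _ => h1, fun _ => hp'⟩⟩

lemma isOpen_halfspace_lt (f : (Fin n → ℝ) →ₗ[ℝ] ℝ) (r : ℝ) : IsOpen {w | f w < r} :=
  (isOpen_Iio (a := r)).preimage f.continuous_of_finiteDimensional

lemma isOpen_halfspace_gt (f : (Fin n → ℝ) →ₗ[ℝ] ℝ) (r : ℝ) : IsOpen {w | r < f w} :=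
  (isOpen_Ioi (a := r)).preimage f.continuous_of_finiteDimensional

lemma isOpen_cell {A : Set (((Fin n → ℝ) →ₗ[ℝ] ℝ) × ℝ)} (hA : A.Finite) {v : Fin n → ℝ}
    (hv : v ∈ arrCompl A) : IsOpen (cell A v) := by
  rw [cell_eq_iInter hv]
  refine hA.isOpen_biInter fun p _ => ?_
  split_ifs
  · exact isOpen_halfspace_lt _ _
  · exact isOpen_halfspace_gt _ _

lemma convex_cell {A : Set (((Fin n → ℝ) →ₗ[ℝ] ℝ) × ℝ)} {v : Fin n → ℝ}
    (hv : v ∈ arrCompl A) : Convex ℝ (cell A v) := by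
  rw [cell_eq_iInter hv]
  refine convex_iInter fun p => convex_iInter fun _ => ?_
  split_ifs
  · exact convex_halfSpace_lt (LinearMap.isLinear _) _
  · exact convex_halfSpace_gt (LinearMap.isLinear _) _

lemma isOpen_arrCompl {A : Set (((Fin n → ℝ) →ₗ[ℝ] ℝ) × ℝ)} (hA : A.Finite) :
    IsOpen (arrCompl A) := by
  have : arrCompl A = ⋂ p ∈ A, {w | p.1 w < p.2} ∪ {w | p.2 < p.1 w} := by
    ext w
    simp only [arrCompl, Set.mem_setOf_eq, Set.mem_iInter, Set.mem_union]
    exact ⟨fun h p hp => lt_or_gt_of_ne (h p hp), fun h p hp => ne_iff_lt_or_gt.2 (h p hp)⟩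
  rw [this]
  exact hA.isOpen_biInter fun p _ => (isOpen_halfspace_lt _ _).union (isOpen_halfspace_gt _ _)

lemma connectedComponentIn_eq_cell {A : Set (((Fin n → ℝ) →ₗ[ℝ] ℝ) × ℝ)} (hA : A.Finite)
    {v : Fin n → ℝ} (hv : v ∈ arrCompl A) :
    connectedComponentIn (arrCompl A) v = cell A v := by
  apply subset_antisymm
  · set W : Set (Fin n → ℝ) :=
      ⋃ p ∈ A, (if p.1 v < p.2 then {w | p.2 < p.1 w} else {w | p.1 w < p.2}) with hW
    have hWopen : IsOpen W := by
      refine isOpen_biUnion fun p _ => ?_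
      split_ifs
      · exact isOpen_halfspace_gt _ _
      · exact isOpen_halfspace_lt _ _
    have hdisj : Disjoint (cell A v) W := by
      rw [Set.disjoint_left]
      intro w hw hwW
      simp only [hW, Set.mem_iUnion] at hwW
      obtain ⟨p, hp, hmem⟩ := hwW
      have h := hw p hp
      rcases lt_trichotomy (p.1 v) p.2 with h1 | h1 | h1
      · rw [if_pos h1] at hmem
        exact absurd ((h.1.2 h1).trans hmem) (lt_irrefl _)
      · exact hv p hp h1
      · rw [if_neg (not_lt.2 h1.le)] at hmem
        exact absurd (hmem.trans (h.2.2 h1)) (lt_irrefl _)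
    have hsub : arrCompl A ⊆ cell A v ∪ W := by
      intro w hw
      by_cases hc : w ∈ cell A v
      · exact Or.inl hc
      · right
        simp only [cell, Set.mem_setOf_eq, not_forall] at hc
        obtain ⟨p, hp, hnot⟩ := hc
        simp only [hW, Set.mem_iUnion]
        refine ⟨p, hp, ?_⟩
        rcases lt_trichotomy (p.1 v) p.2 with h1 | h1 | h1
        · rw [if_pos h1]
          rcases lt_trichotomy (p.1 w) p.2 with h2 | h2 | h2
          · exact absurd ⟨⟨fun _ => h1, fun _ => h2⟩,
              ⟨fun hh => absurd (hh.trans h2) (lt_irrefl _),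
               fun hh => absurd (h1.trans hh) (lt_irrefl _)⟩⟩ hnot
          · exact absurd h2 (hw p hp)
          · exact h2
        · exact absurd h1 (hv p hp)
        · rw [if_neg (not_lt.2 h1.le)]
          rcases lt_trichotomy (p.1 w) p.2 with h2 | h2 | h2
          · exact h2
          · exact absurd h2 (hw p hp)
          · exact absurd ⟨⟨fun hh => absurd h2 hh.asymm, fun hh => absurd h1 hh.asymm⟩,
              ⟨fun _ => h1, fun _ => h2⟩⟩ hnot
    refine IsPreconnected.subset_left_of_subset_union (isOpen_cell hA hv) hWopen hdisj
      ((connectedComponentIn_subset _ _).trans hsub) ?_ isPreconnected_connectedComponentIn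
    exact ⟨v, mem_connectedComponentIn hv, mem_cell_self A v⟩
  · exact (convex_cell hv).isPreconnected.subset_connectedComponentIn
      (mem_cell_self A v) (cell_subset_compl hv)

lemma chambers_eq_cells {A : Set (((Fin n → ℝ) →ₗ[ℝ] ℝ) × ℝ)} (hA : A.Finite) :
    chambers A = (fun v => cell A v) '' (arrCompl A) := by
  ext C
  simp only [chambers, Set.mem_setOf_eq, Set.mem_image]
  constructor
  · rintro ⟨x, hx, rfl⟩
    exact ⟨x, hx, (connectedComponentIn_eq_cell hA hx).symm⟩
  · rintro ⟨x, hx, rfl⟩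
    exact ⟨x, hx, (connectedComponentIn_eq_cell hA hx).symm⟩


/-! ### Statistics -/

@[simp] lemma pr_sub_apply (i j : Fin n) (v : Fin n → ℝ) : (pr i - pr j) v = v i - v j := rfl

/-- `z_j = x_0 - x_j`. -/
def zf (v : Fin n → ℝ) (j : Fin n) : ℝ := v ⟨0, j.pos⟩ - v j

lemma zf_eq (v : Fin n → ℝ) (j : Fin n) (h0 : 0 < n) : zf v j = v ⟨0, h0⟩ - v j := rfl

lemma sub_zf (v : Fin n → ℝ) (i j : Fin n) : v i - v j = zf v j - zf v i := by
  rw [zf_eq v i j.pos, zf_eq v j j.pos]; ring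

/-- number of thresholds `0,…,j` strictly below `z_j` -/
def cstat (v : Fin n → ℝ) (j : Fin n) : ℕ :=
  ((Finset.range (j.1+1)).filter fun s : ℕ => ((s:ℕ):ℝ) < zf v j).card

def bSet (v : Fin n → ℝ) (j : Fin n) : Finset (Fin n) :=
  Finset.univ.filter fun k => j < k ∧ zf v k < zf v j

def mstat (v : Fin n → ℝ) (j : Fin n) : ℕ := cstat v j + (bSet v j).card

lemma cstat_le (v : Fin n → ℝ) (j : Fin n) : cstat v j ≤ j.1 + 1 :=
  (Finset.card_filter_le _ _).trans_eq (Finset.card_range _)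

lemma mem_ishArr_braid {i j : Fin n} (h : i < j) :
    ((pr i - pr j, (0:ℝ)) : ((Fin n → ℝ) →ₗ[ℝ] ℝ) × ℝ) ∈ ishArr n := Or.inl ⟨i, j, h, rfl⟩

lemma mem_ishArr_thresh {i j : Fin n} (h : i < j) :
    ((pr ⟨0, j.pos⟩ - pr j, ((i:ℕ)+1 : ℝ)) : ((Fin n → ℝ) →ₗ[ℝ] ℝ) × ℝ) ∈ ishArr n :=
  Or.inr ⟨i, j, h, rfl⟩

variable {v w : Fin n → ℝ}

lemma vne_of_lt (hv : v ∈ arrCompl (ishArr n)) {i j : Fin n} (h : i < j) : v i ≠ v j := by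
  have := hv _ (mem_ishArr_braid h)
  simpa [sub_ne_zero, pr] using this

lemma zf_ne_pair (hv : v ∈ arrCompl (ishArr n)) {j k : Fin n} (h : j < k) :
    zf v k ≠ zf v j := by
  have h1 := vne_of_lt hv h
  intro he
  apply h1
  have := sub_zf v j k
  rw [he, sub_self] at this
  linarith [this]

lemma zf_ne_thresh (hv : v ∈ arrCompl (ishArr n)) {j : Fin n} (hj : 0 < j.1) {s : ℕ}
    (hs : s ≤ j.1) : zf v j ≠ (s : ℝ) := by
  cases s with
  | zero =>
    have : (⟨0, j.pos⟩ : Fin n) < j := by simp [Fin.lt_def, hj]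
    have h1 := vne_of_lt hv this
    simpa [zf, sub_ne_zero] using h1
  | succ s =>
    have hjn := j.isLt
    have hsn : s < n := by omega
    have hlt : (⟨s, hsn⟩ : Fin n) < j := by simp only [Fin.lt_def]; omega
    have h1 := hv _ (mem_ishArr_thresh hlt)
    have h2 : (pr (⟨0, j.pos⟩ : Fin n) - pr j) v = zf v j := rfl
    rw [h2] at h1
    intro he
    apply h1
    rw [he]
    push_cast
    ring

lemma lt_zf_iff (hv : v ∈ arrCompl (ishArr n)) {j : Fin n} (hj : 0 < j.1) {s : ℕ}
    (hs : s ≤ j.1) : ((s:ℝ) < zf v j) ↔ s < cstat v j := by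
  constructor
  · intro h
    have hsub : Finset.range (s+1) ⊆
        (Finset.range (j.1+1)).filter fun s' : ℕ => ((s':ℕ):ℝ) < zf v j := by
      intro s' hs'
      rw [Finset.mem_range] at hs'
      rw [Finset.mem_filter, Finset.mem_range]
      refine ⟨by omega, lt_of_le_of_lt ?_ h⟩
      exact_mod_cast Nat.le_of_lt_succ hs'
    have := Finset.card_le_card hsub
    rw [Finset.card_range] at this
    unfold cstat; omega
  · intro h
    by_contra h'
    have hlt : zf v j < s := lt_of_le_of_ne (not_lt.1 h') (zf_ne_thresh hv hj hs)
    have hsub : ((Finset.range (j.1+1)).filter fun s' : ℕ => ((s':ℕ):ℝ) < zf v j) ⊆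
        Finset.range s := by
      intro s' hs'
      rw [Finset.mem_filter] at hs'
      rw [Finset.mem_range]
      exact_mod_cast hs'.2.trans hlt
    have := Finset.card_le_card hsub
    rw [Finset.card_range] at this
    unfold cstat at h; omega


/-! ### m-statistic determines the sign vector -/

lemma bSet_subset_total (hv : v ∈ arrCompl (ishArr n)) (hw : w ∈ arrCompl (ishArr n))
    {j : Fin n}
    (hpair : ∀ k k' : Fin n, j < k → k < k' → (zf v k' < zf v k ↔ zf w k' < zf w k)) :
    bSet v j ⊆ bSet w j ∨ bSet w j ⊆ bSet v j := by
  by_contra hcon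
  push_neg at hcon
  obtain ⟨h1, h2⟩ := hcon
  rw [Finset.not_subset] at h1 h2
  obtain ⟨k, hkv, hkw⟩ := h1
  obtain ⟨k', hk'w, hk'v⟩ := h2
  simp only [bSet, Finset.mem_filter, Finset.mem_univ, true_and] at hkv hkw hk'w hk'v
  obtain ⟨hjk, hzvk⟩ := hkv
  obtain ⟨hjk', hzwk'⟩ := hk'w
  have hwk : zf w j < zf w k :=
    lt_of_le_of_ne (not_lt.1 fun hh => hkw ⟨hjk, hh⟩) (zf_ne_pair hw hjk).symm
  have hvk' : zf v j < zf v k' :=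
    lt_of_le_of_ne (not_lt.1 fun hh => hk'v ⟨hjk', hh⟩) (zf_ne_pair hv hjk').symm
  have hkk' : k ≠ k' := by
    rintro rfl
    exact absurd hzwk' (not_lt.2 hwk.le)
  rcases lt_or_gt_of_ne hkk' with h | h
  · have hnv : ¬ (zf v k' < zf v k) := not_lt.2 (hzvk.trans hvk').le
    have hnw : ¬ (zf w k' < zf w k) := fun hh => hnv ((hpair k k' hjk h).2 hh)
    exact hnw (hzwk'.trans hwk)
  · have hvv : zf v k < zf v k' := hzvk.trans hvk'
    have hww : zf w k < zf w k' := (hpair k' k hjk' h).1 hvv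
    exact absurd hww (not_lt.2 (hzwk'.trans hwk).le)

lemma bSet_subset_of_cstat_lt (hv : v ∈ arrCompl (ishArr n)) (hw : w ∈ arrCompl (ishArr n))
    {j : Fin n} (hj : 0 < j.1)
    (hthresh : ∀ k : Fin n, j < k → ∀ s : ℕ, s ≤ k.1 → (((s:ℕ):ℝ) < zf v k ↔ ((s:ℕ):ℝ) < zf w k))
    (hc : cstat v j < cstat w j) : bSet v j ⊆ bSet w j := by
  intro k hk
  simp only [bSet, Finset.mem_filter, Finset.mem_univ, true_and] at hk ⊢
  obtain ⟨hjk, hzv⟩ := hk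
  refine ⟨hjk, ?_⟩
  by_contra hh
  have hwk : zf w j < zf w k := lt_of_le_of_ne (not_lt.1 hh) (zf_ne_pair hw hjk).symm
  have hsj : cstat v j ≤ j.1 := by have := cstat_le w j; omega
  have h1 : zf v j < (cstat v j : ℝ) := by
    refine lt_of_le_of_ne (not_lt.1 fun hh2 => ?_) (zf_ne_thresh hv hj hsj)
    exact absurd ((lt_zf_iff hv hj hsj).1 hh2) (lt_irrefl _)
  have h2 : ((cstat v j : ℕ):ℝ) < zf w j := (lt_zf_iff hw hj hsj).2 hc
  have hjk1 : j.1 < k.1 := hjk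
  have h4 : ¬ (((cstat v j : ℕ):ℝ) < zf v k) := not_lt.2 (hzv.trans h1).le
  exact h4 ((hthresh k hjk (cstat v j) (by omega)).2 (h2.trans hwk))

lemma step_lemma (hv : v ∈ arrCompl (ishArr n)) (hw : w ∈ arrCompl (ishArr n))
    {j : Fin n} (hj : 0 < j.1)
    (hthresh : ∀ k : Fin n, j < k → ∀ s : ℕ, s ≤ k.1 → (((s:ℕ):ℝ) < zf v k ↔ ((s:ℕ):ℝ) < zf w k))
    (hmj : mstat v j = mstat w j)
    (hsub : bSet v j ⊆ bSet w j) : cstat v j = cstat w j ∧ bSet v j = bSet w j := by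
  have hcle : cstat v j ≤ cstat w j := by
    by_contra hcc
    have hsub2 : bSet w j ⊆ bSet v j :=
      bSet_subset_of_cstat_lt hw hv hj (fun k hk s hs => (hthresh k hk s hs).symm) (by omega)
    have hBeq : bSet v j = bSet w j := Finset.Subset.antisymm hsub hsub2
    rw [mstat, mstat, hBeq] at hmj
    omega
  have hcard : (bSet v j).card ≤ (bSet w j).card := Finset.card_le_card hsub
  rw [mstat, mstat] at hmj
  refine ⟨by omega, Finset.eq_of_subset_of_card_le hsub (by omega)⟩

lemma agree_of_mstat_eq (hv : v ∈ arrCompl (ishArr n)) (hw : w ∈ arrCompl (ishArr n))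
    (hm : ∀ j : Fin n, 0 < j.1 → mstat v j = mstat w j) :
    ∀ j : Fin n, 0 < j.1 → cstat v j = cstat w j ∧ bSet v j = bSet w j := by
  suffices key : ∀ d : ℕ, ∀ j : Fin n, 0 < j.1 → n - j.1 ≤ d →
      cstat v j = cstat w j ∧ bSet v j = bSet w j by
    intro j hj
    exact key n j hj (by omega)
  intro d
  induction d with
  | zero =>
    intro j _ hd
    exact absurd hd (by have := j.isLt; omega)
  | succ d IH =>
    intro j hj hd
    have IH' : ∀ k : Fin n, j < k → cstat v k = cstat w k ∧ bSet v k = bSet w k := by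
      intro k hk
      have hk1 : j.1 < k.1 := hk
      have hkn := k.isLt
      exact IH k (by omega) (by omega)
    have hthresh : ∀ k : Fin n, j < k → ∀ s : ℕ, s ≤ k.1 →
        (((s:ℕ):ℝ) < zf v k ↔ ((s:ℕ):ℝ) < zf w k) := by
      intro k hk s hs
      have hk0 : 0 < k.1 := lt_trans hj hk
      rw [lt_zf_iff hv hk0 hs, lt_zf_iff hw hk0 hs, (IH' k hk).1]
    have hpair : ∀ k k' : Fin n, j < k → k < k' → (zf v k' < zf v k ↔ zf w k' < zf w k) := by
      intro k k' hk hkk'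
      have hB := (IH' k hk).2
      constructor
      · intro hlt
        have hmem : k' ∈ bSet v k := by
          simp only [bSet, Finset.mem_filter, Finset.mem_univ, true_and]
          exact ⟨hkk', hlt⟩
        rw [hB] at hmem
        simp only [bSet, Finset.mem_filter, Finset.mem_univ, true_and] at hmem
        exact hmem.2
      · intro hlt
        have hmem : k' ∈ bSet w k := by
          simp only [bSet, Finset.mem_filter, Finset.mem_univ, true_and]
          exact ⟨hkk', hlt⟩
        rw [← hB] at hmem
        simp only [bSet, Finset.mem_filter, Finset.mem_univ, true_and] at hmem
        exact hmem.2
    rcases bSet_subset_total hv hw hpair with hsub | hsub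
    · exact step_lemma hv hw hj hthresh (hm j hj) hsub
    · obtain ⟨h1, h2⟩ := step_lemma hw hv hj
        (fun k hk s hs => (hthresh k hk s hs).symm) (hm j hj).symm hsub
      exact ⟨h1.symm, h2.symm⟩


/-! ### cell membership vs m-statistic -/

lemma pair_of_iff {A : Set (((Fin n → ℝ) →ₗ[ℝ] ℝ) × ℝ)} (hv : v ∈ arrCompl A)
    (hw : w ∈ arrCompl A) {p : ((Fin n → ℝ) →ₗ[ℝ] ℝ) × ℝ} (hp : p ∈ A)
    (h : p.1 w < p.2 ↔ p.1 v < p.2) :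
    (p.1 w < p.2 ↔ p.1 v < p.2) ∧ (p.2 < p.1 w ↔ p.2 < p.1 v) := by
  refine ⟨h, ?_⟩
  constructor
  · intro hh
    exact ((hv p hp).lt_or_gt).resolve_left fun hc => absurd (h.2 hc) (not_lt.2 hh.le)
  · intro hh
    exact ((hw p hp).lt_or_gt).resolve_left fun hc => absurd (h.1 hc) (not_lt.2 hh.le)

lemma zf_lt_zero_iff (hv : v ∈ arrCompl (ishArr n)) (hw : w ∈ arrCompl (ishArr n))
    {j : Fin n} (hj : 0 < j.1) (hc : cstat v j = cstat w j) :
    (zf w j < 0 ↔ zf v j < 0) := by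
  have h0 : (((0:ℕ):ℝ)) = (0:ℝ) := by norm_num
  have hv0 := zf_ne_thresh hv hj (Nat.zero_le j.1)
  have hw0 := zf_ne_thresh hw hj (Nat.zero_le j.1)
  rw [h0] at hv0 hw0
  have hiff : (0:ℝ) < zf v j ↔ (0:ℝ) < zf w j := by
    have h1 := lt_zf_iff hv hj (Nat.zero_le j.1)
    have h2 := lt_zf_iff hw hj (Nat.zero_le j.1)
    rw [h0] at h1 h2
    rw [h1, h2, hc]
  constructor
  · intro hh
    rcases hv0.lt_or_gt with h' | h'
    · exact h'
    · exact absurd (hiff.1 h') (not_lt.2 hh.le)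
  · intro hh
    rcases hw0.lt_or_gt with h' | h'
    · exact h'
    · exact absurd (hiff.2 h') (not_lt.2 hh.le)

lemma mem_cell_of_mstat_eq (hv : v ∈ arrCompl (ishArr n)) (hw : w ∈ arrCompl (ishArr n))
    (hm : ∀ j : Fin n, 0 < j.1 → mstat v j = mstat w j) :
    w ∈ cell (ishArr n) v := by
  have hagree := agree_of_mstat_eq hv hw hm
  intro p hp
  rcases hp with ⟨i, j, hij, rfl⟩ | ⟨i, j, hij, rfl⟩
  · -- braid hyperplane x_i = x_j
    have hj : 0 < j.1 := lt_of_le_of_lt (Nat.zero_le i.1) hij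
    refine pair_of_iff hv hw (mem_ishArr_braid hij) ?_
    simp only [pr_sub_apply]
    by_cases hi : i.1 = 0
    · have hieq : i = ⟨0, j.pos⟩ := Fin.ext hi
      subst hieq
      have hzv : v (⟨0, j.pos⟩ : Fin n) - v j = zf v j := rfl
      have hzw : w (⟨0, j.pos⟩ : Fin n) - w j = zf w j := rfl
      rw [hzv, hzw]
      simpa using zf_lt_zero_iff hv hw hj (hagree j hj).1
    · have hi0 : 0 < i.1 := Nat.pos_of_ne_zero hi
      rw [sub_zf v i j, sub_zf w i j]
      have hB := (hagree i hi0).2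
      have hmemv : (zf v j - zf v i < 0) ↔ j ∈ bSet v i := by
        simp only [bSet, Finset.mem_filter, Finset.mem_univ, true_and]
        constructor
        · intro hh; exact ⟨hij, by linarith⟩
        · intro hh; linarith [hh.2]
      have hmemw : (zf w j - zf w i < 0) ↔ j ∈ bSet w i := by
        simp only [bSet, Finset.mem_filter, Finset.mem_univ, true_and]
        constructor
        · intro hh; exact ⟨hij, by linarith⟩
        · intro hh; linarith [hh.2]
      rw [hmemv, hmemw, hB]
  · -- threshold hyperplane x_0 - x_j = i+1
    have hj : 0 < j.1 := lt_of_le_of_lt (Nat.zero_le i.1) hij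
    refine pair_of_iff hv hw (mem_ishArr_thresh hij) ?_
    have hzv : (pr (⟨0, i.pos⟩ : Fin n) - pr j) v = zf v j := rfl
    have hzw : (pr (⟨0, i.pos⟩ : Fin n) - pr j) w = zf w j := rfl
    simp only [hzv, hzw]
    have hs : i.1 + 1 ≤ j.1 := hij
    have hcast : ((i.1:ℝ) + 1) = (((i.1+1 : ℕ):ℕ):ℝ) := by push_cast; ring
    rw [hcast]
    have hnv := zf_ne_thresh hv hj hs
    have hnw := zf_ne_thresh hw hj hs
    have hiff : (((i.1+1 : ℕ):ℝ) < zf v j) ↔ (((i.1+1 : ℕ):ℝ) < zf w j) := by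
      rw [lt_zf_iff hv hj hs, lt_zf_iff hw hj hs, (hagree j hj).1]
    constructor
    · intro hh
      rcases hnv.lt_or_gt with h' | h'
      · exact h'
      · exact absurd (hiff.1 h') (not_lt.2 hh.le)
    · intro hh
      rcases hnw.lt_or_gt with h' | h'
      · exact h'
      · exact absurd (hiff.2 h') (not_lt.2 hh.le)

lemma mstat_eq_of_mem_cell (hcell : w ∈ cell (ishArr n) v) :
    ∀ j : Fin n, 0 < j.1 → mstat v j = mstat w j := by
  intro j hj
  have hc : cstat v j = cstat w j := by
    unfold cstat
    congr 1
    apply Finset.filter_congr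
    intro s hs
    rw [Finset.mem_range] at hs
    have hsj : s ≤ j.1 := by omega
    cases s with
    | zero =>
      have hlt : (⟨0, j.pos⟩ : Fin n) < j := by simp only [Fin.lt_def]; exact hj
      have h := (hcell _ (mem_ishArr_braid hlt)).2
      simp only [pr_sub_apply] at h
      have hzv : v (⟨0, j.pos⟩ : Fin n) - v j = zf v j := rfl
      have hzw : w (⟨0, j.pos⟩ : Fin n) - w j = zf w j := rfl
      rw [hzv, hzw] at h
      simpa using h.symm
    | succ s =>
      have hjn := j.isLt
      have hsn : s < n := by omega
      have hlt : (⟨s, hsn⟩ : Fin n) < j := by simp only [Fin.lt_def]; omega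
      have h := (hcell _ (mem_ishArr_thresh hlt)).2
      have hzv : (pr (⟨0, (⟨s, hsn⟩ : Fin n).pos⟩ : Fin n) - pr j) v = zf v j := rfl
      have hzw : (pr (⟨0, (⟨s, hsn⟩ : Fin n).pos⟩ : Fin n) - pr j) w = zf w j := rfl
      rw [hzv, hzw] at h
      have : ((s:ℝ) + 1) = (((s+1 : ℕ):ℕ):ℝ) := by push_cast; ring
      rw [this] at h
      exact h.symm
  have hb : bSet v j = bSet w j := by
    ext k
    simp only [bSet, Finset.mem_filter, Finset.mem_univ, true_and]
    constructor
    · rintro ⟨hjk, hzv⟩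
      have h := (hcell _ (mem_ishArr_braid hjk)).1
      simp only [pr_sub_apply] at h
      rw [sub_zf v j k, sub_zf w j k] at h
      simp only [sub_neg] at h
      refine ⟨hjk, ?_⟩
      have := h.2 (by linarith)
      linarith
    · rintro ⟨hjk, hzw⟩
      have h := (hcell _ (mem_ishArr_braid hjk)).1
      simp only [pr_sub_apply] at h
      rw [sub_zf v j k, sub_zf w j k] at h
      refine ⟨hjk, ?_⟩
      have := h.1 (by linarith)
      linarith
  unfold mstat
  rw [hc, hb]

lemma mstat_le (hv : v ∈ arrCompl (ishArr n)) (j : Fin n) (hj : 0 < j.1) :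
    mstat v j ≤ n := by
  have h1 := cstat_le v j
  have h2 : bSet v j ⊆ Finset.Ioi j := by
    intro k hk
    simp only [bSet, Finset.mem_filter, Finset.mem_univ, true_and] at hk
    simpa [Finset.mem_Ioi] using hk.1
  have h3 := Finset.card_le_card h2
  rw [Fin.card_Ioi] at h3
  have hjn := j.isLt
  unfold mstat
  omega


/-! ### slot construction -/

lemma exists_slot (S : Finset ℝ) : ∀ m : ℕ, m ≤ S.card →
    ∃ x : ℝ, x ∉ S ∧ (S.filter (fun c => c < x)).card = m := by
  intro m
  induction m with
  | zero =>
    intro _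
    rcases S.eq_empty_or_nonempty with h | h
    · exact ⟨0, by simp [h]⟩
    · refine ⟨S.min' h - 1, ?_, ?_⟩
      · intro hx
        have := S.min'_le _ hx
        linarith
      · rw [Finset.card_eq_zero, Finset.filter_eq_empty_iff]
        intro c hc
        have := S.min'_le c hc
        intro hcc
        linarith
  | succ m IH =>
    intro hm
    obtain ⟨x, hx, hcard⟩ := IH (by omega)
    set A := S.filter (fun c => x < c) with hA
    have hneg : S.filter (fun c => ¬ c < x) = A := by
      rw [hA]
      apply Finset.filter_congr
      intro c hc
      constructor
      · intro h
        exact lt_of_le_of_ne (not_lt.1 h) fun he => hx (he ▸ hc)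
      · intro h
        exact not_lt.2 h.le
    have hsplit : (S.filter (fun c => c < x)).card + A.card = S.card := by
      rw [← hneg]
      exact Finset.card_filter_add_card_filter_not (p := fun c => c < x)
    have hAne : A.Nonempty := by
      rw [← Finset.card_pos]
      omega
    set y := A.min' hAne with hy
    have hyA : y ∈ A := A.min'_mem hAne
    have hyS : y ∈ S := (Finset.mem_filter.1 hyA).1
    have hxy : x < y := (Finset.mem_filter.1 hyA).2
    set B := A.erase y with hB
    obtain ⟨x', hyx', hx'ub⟩ : ∃ x', y < x' ∧ ∀ c ∈ B, x' < c := by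
      rcases B.eq_empty_or_nonempty with hBe | hBne
      · exact ⟨y + 1, by linarith, by simp [hBe]⟩
      · have hyB : y < B.min' hBne := by
          have hmem := B.min'_mem hBne
          have h1 : B.min' hBne ∈ A := Finset.mem_of_mem_erase hmem
          have h2 : B.min' hBne ≠ y := Finset.ne_of_mem_erase hmem
          exact lt_of_le_of_ne (A.min'_le _ h1) h2.symm
        refine ⟨(y + B.min' hBne)/2, by linarith, ?_⟩
        intro c hc
        have := B.min'_le c hc
        have h3 : (y + B.min' hBne)/2 < B.min' hBne := by linarith
        linarith
    have key : ∀ c ∈ S, (c < x' ↔ (c < x ∨ c = y)) := by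
      intro c hc
      constructor
      · intro hcx'
        by_cases h1 : c < x
        · exact Or.inl h1
        · have hcA : c ∈ A := by
            rw [hA, Finset.mem_filter]
            exact ⟨hc, lt_of_le_of_ne (not_lt.1 h1) fun he => hx (he ▸ hc)⟩
          by_cases h2 : c = y
          · exact Or.inr h2
          · have hcB : c ∈ B := Finset.mem_erase.2 ⟨h2, hcA⟩
            exact absurd (hx'ub c hcB) (not_lt.2 hcx'.le)
      · intro h
        rcases h with h | rfl
        · linarith
        · exact hyx'
    have hx'S : x' ∉ S := by
      intro hmem
      rcases lt_trichotomy x' x with h1 | h1 | h1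
      · linarith
      · exact hx (h1 ▸ hmem)
      · have hx'A : x' ∈ A := by
          rw [hA, Finset.mem_filter]
          exact ⟨hmem, h1⟩
        have hx'y : x' ≠ y := fun he => absurd (he ▸ hyx') (lt_irrefl _)
        have hx'B : x' ∈ B := Finset.mem_erase.2 ⟨hx'y, hx'A⟩
        exact absurd (hx'ub x' hx'B) (lt_irrefl _)
    refine ⟨x', hx'S, ?_⟩
    have hfe : S.filter (fun c => c < x') = insert y (S.filter (fun c => c < x)) := by
      ext c
      simp only [Finset.mem_filter, Finset.mem_insert]
      constructor
      · rintro ⟨hc, hcx'⟩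
        rcases (key c hc).1 hcx' with h | h
        · exact Or.inr ⟨hc, h⟩
        · exact Or.inl h
      · intro h
        rcases h with rfl | ⟨hc, hcx⟩
        · exact ⟨hyS, hyx'⟩
        · exact ⟨hc, (key c hc).2 (Or.inl hcx)⟩
    rw [hfe, Finset.card_insert_of_notMem, hcard]
    simp only [Finset.mem_filter, not_and]
    intro _
    exact not_lt.2 hxy.le

lemma exists_slot' (S : Finset ℝ) (m : ℕ) :
    ∃ x : ℝ, x ∉ S ∧ (S.filter (fun c => c < x)).card = min m S.card :=
  exists_slot S (min m S.card) (min_le_right _ _)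

/-- recursive construction of the `z`-values realizing a given `m`-vector -/
noncomputable def Z (N : ℕ) (μ : ℕ → ℕ) (j : ℕ) : ℝ :=
  (exists_slot' (((Finset.range (j+1)).image (fun s : ℕ => (s:ℝ))) ∪
      ((Finset.Ioo j N).attach.image (fun k => Z N μ k.1))) (μ j)).choose
termination_by N - j
decreasing_by
  all_goals
    have hk := k.2
    rw [Finset.mem_Ioo] at hk
    omega

/-- the crossing set -/
noncomputable def crossS (N : ℕ) (μ : ℕ → ℕ) (j : ℕ) : Finset ℝ :=
  ((Finset.range (j+1)).image (fun s : ℕ => (s:ℝ))) ∪ ((Finset.Ioo j N).image (Z N μ))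

lemma Z_spec (N : ℕ) (μ : ℕ → ℕ) (j : ℕ) :
    Z N μ j ∉ crossS N μ j ∧
      ((crossS N μ j).filter (fun c => c < Z N μ j)).card = min (μ j) (crossS N μ j).card := by
  have himg : (Finset.Ioo j N).attach.image (fun k => Z N μ k.1) =
      (Finset.Ioo j N).image (Z N μ) := by
    ext x
    simp [Finset.mem_image, Subtype.exists]
  have hcs : crossS N μ j = ((Finset.range (j+1)).image (fun s : ℕ => (s:ℝ))) ∪
      ((Finset.Ioo j N).attach.image (fun k => Z N μ k.1)) := by
    rw [crossS, himg]
  rw [hcs, Z]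
  exact (exists_slot' _ (μ j)).choose_spec


lemma Z_props (N : ℕ) (μ : ℕ → ℕ) (j : ℕ) :
    (∀ s : ℕ, s ≤ j → Z N μ j ≠ (s:ℝ)) ∧ (∀ k, j < k → k < N → Z N μ j ≠ Z N μ k) := by
  have hspec := (Z_spec N μ j).1
  constructor
  · intro s hs he
    apply hspec
    rw [crossS]
    apply Finset.mem_union_left
    exact Finset.mem_image.2 ⟨s, Finset.mem_range.2 (by omega), he.symm⟩
  · intro k h1 h2 he
    apply hspec
    rw [crossS]
    apply Finset.mem_union_right
    exact Finset.mem_image.2 ⟨k, Finset.mem_Ioo.2 ⟨h1, h2⟩, he.symm⟩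

lemma Z_injOn (N : ℕ) (μ : ℕ → ℕ) {a b : ℕ} (hb : b < N) (hab : Z N μ a = Z N μ b) :
    a = b ∨ N ≤ a := by
  by_contra h
  push_neg at h
  obtain ⟨hne, haN⟩ := h
  rcases Nat.lt_or_ge a b with h1 | h1
  · exact (Z_props N μ a).2 b h1 hb hab
  · exact (Z_props N μ b).2 a (lt_of_le_of_ne h1 (Ne.symm hne)) haN hab.symm

lemma crossS_card (N : ℕ) (μ : ℕ → ℕ) (j : ℕ) (hj : j < N) : (crossS N μ j).card = N := by
  rw [crossS, Finset.card_union_of_disjoint]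
  · rw [Finset.card_image_of_injective _ Nat.cast_injective]
    rw [Finset.card_image_of_injOn, Finset.card_range, Nat.card_Ioo]
    · omega
    · intro a ha b hb hab
      rw [Finset.mem_coe, Finset.mem_Ioo] at ha hb
      rcases Z_injOn N μ hb.2 hab with h | h
      · exact h
      · omega
  · rw [Finset.disjoint_left]
    intro c hc1 hc2
    rw [Finset.mem_image] at hc1 hc2
    obtain ⟨s, hs, rfl⟩ := hc1
    obtain ⟨k, hk, hZk⟩ := hc2
    rw [Finset.mem_range] at hs
    rw [Finset.mem_Ioo] at hk
    exact (Z_props N μ k).1 s (by omega) hZk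

/-- representative point of the chamber with `m`-vector `μ` -/
noncomputable def pointOf (N : ℕ) (μ : ℕ → ℕ) : Fin N → ℝ :=
  fun i => if i.1 = 0 then 0 else - Z N μ i.1

lemma zf_pointOf (N : ℕ) (μ : ℕ → ℕ) (j : Fin N) (hj : 0 < j.1) :
    zf (pointOf N μ) j = Z N μ j.1 := by
  show (if (0:ℕ) = 0 then (0:ℝ) else _) - (if j.1 = 0 then (0:ℝ) else - Z N μ j.1) = Z N μ j.1
  rw [if_pos rfl, if_neg (by omega)]
  ring

lemma pointOf_mem_compl (N : ℕ) (μ : ℕ → ℕ) : pointOf N μ ∈ arrCompl (ishArr N) := by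
  intro p hp
  rcases hp with ⟨i, j, hij, rfl⟩ | ⟨i, j, hij, rfl⟩
  · simp only [pr_sub_apply]
    have hj : 0 < j.1 := lt_of_le_of_lt (Nat.zero_le _) hij
    have hvj : pointOf N μ j = - Z N μ j.1 := if_neg (by omega)
    by_cases hi : i.1 = 0
    · have hvi : pointOf N μ i = 0 := if_pos hi
      rw [hvi, hvj]
      intro he
      exact (Z_props N μ j.1).1 0 (Nat.zero_le _) (by push_cast; linarith)
    · have hvi : pointOf N μ i = - Z N μ i.1 := if_neg hi
      rw [hvi, hvj]
      intro he
      exact (Z_props N μ i.1).2 j.1 hij j.isLt (by linarith)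
  · have hj : 0 < j.1 := lt_of_le_of_lt (Nat.zero_le _) hij
    have h1 : (pr (⟨0, i.pos⟩ : Fin N) - pr j) (pointOf N μ) = zf (pointOf N μ) j := rfl
    rw [h1, zf_pointOf N μ j hj]
    intro he
    refine (Z_props N μ j.1).1 (i.1+1) hij ?_
    rw [he]
    push_cast
    ring

lemma mstat_pointOf (N : ℕ) (μ : ℕ → ℕ) (hμ : ∀ j, μ j ≤ N) (j : Fin N) (hj : 0 < j.1) :
    mstat (pointOf N μ) j = μ j.1 := by
  have hspec := (Z_spec N μ j.1).2
  rw [crossS_card N μ j.1 j.isLt, min_eq_left (hμ j.1)] at hspec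
  set x := Z N μ j.1 with hx
  set v := pointOf N μ with hv
  have hzfj : zf v j = x := zf_pointOf N μ j hj
  -- split the filter over the union
  rw [crossS, Finset.filter_union, Finset.card_union_of_disjoint] at hspec
  · -- first part is cstat
    have h1 : ((((Finset.range (j.1+1)).image (fun s : ℕ => (s:ℝ))).filter (fun c => c < x)).card)
        = cstat v j := by
      rw [Finset.filter_image, Finset.card_image_of_injective _
        Nat.cast_injective]
      unfold cstat
      rw [hzfj]
    have h2 : ((((Finset.Ioo j.1 N).image (Z N μ)).filter (fun c => c < x)).card)
        = (bSet v j).card := by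
      rw [Finset.filter_image, Finset.card_image_of_injOn]
      · apply Finset.card_bij (fun (a : ℕ) (ha : a ∈ (Finset.Ioo j.1 N).filter fun a => Z N μ a < x) => (⟨a, (Finset.mem_Ioo.1 (Finset.mem_filter.1 ha).1).2⟩ : Fin N))
        · intro a ha
          have h3 := Finset.mem_filter.1 ha
          have h4 := Finset.mem_Ioo.1 h3.1
          simp only [bSet, Finset.mem_filter, Finset.mem_univ, true_and]
          constructor
          · exact h4.1
          · rw [hzfj]
            have h5 : (0:ℕ) < a := by omega
            have : zf v (⟨a, h4.2⟩ : Fin N) = Z N μ a := zf_pointOf N μ ⟨a, h4.2⟩ h5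
            rw [this]
            exact h3.2
        · intro a ha b hb hab
          exact congrArg Fin.val hab
        · intro b hb
          simp only [bSet, Finset.mem_filter, Finset.mem_univ, true_and] at hb
          refine ⟨b.1, Finset.mem_filter.2 ⟨Finset.mem_Ioo.2 ⟨hb.1, b.isLt⟩, ?_⟩, rfl⟩
          have : zf v b = Z N μ b.1 := zf_pointOf N μ _ (lt_trans hj hb.1)
          rw [this, hzfj] at hb
          exact hb.2
      · intro a ha b hb hab
        rw [Finset.coe_filter, Set.mem_setOf_eq] at ha hb
        rcases Z_injOn N μ (Finset.mem_Ioo.1 hb.1).2 hab with h | h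
        · exact h
        · have := (Finset.mem_Ioo.1 ha.1).2
          omega
    rw [h1, h2] at hspec
    rw [mstat]
    exact hspec
  · rw [Finset.disjoint_left]
    intro c hc1 hc2
    have hc1' := Finset.mem_of_mem_filter _ hc1
    have hc2' := Finset.mem_of_mem_filter _ hc2
    rw [Finset.mem_image] at hc1' hc2'
    obtain ⟨s, hs, rfl⟩ := hc1'
    obtain ⟨k, hk, hZk⟩ := hc2'
    rw [Finset.mem_range] at hs
    rw [Finset.mem_Ioo] at hk
    exact (Z_props N μ k).1 s (by omega) hZk


/-! ### enumeration of the arrangement -/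

def idxSet (N : ℕ) : Finset (Fin N × Fin N × Bool) :=
  Finset.univ.filter (fun x => x.1 < x.2.1)

noncomputable def enc {N : ℕ} (x : Fin N × Fin N × Bool) : ((Fin N → ℝ) →ₗ[ℝ] ℝ) × ℝ :=
  if x.2.2 then (pr ⟨0, x.1.pos⟩ - pr x.2.1, ((x.1 : ℕ) + 1 : ℝ))
  else (pr x.1 - pr x.2.1, 0)

lemma ishArr_eq_image (N : ℕ) : ishArr N = ↑((idxSet N).image enc) := by
  ext p
  simp only [ishArr, Set.mem_union, Set.mem_setOf_eq, Finset.coe_image, Set.mem_image,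
    Finset.mem_coe, idxSet, Finset.mem_filter, Finset.mem_univ, true_and]
  constructor
  · rintro (⟨i, j, hij, rfl⟩ | ⟨i, j, hij, rfl⟩)
    · exact ⟨(i, j, false), hij, rfl⟩
    · exact ⟨(i, j, true), hij, rfl⟩
  · rintro ⟨⟨i, j, b⟩, hij, rfl⟩
    cases b
    · exact Or.inl ⟨i, j, hij, rfl⟩
    · exact Or.inr ⟨i, j, hij, rfl⟩

lemma ishArr_finite (N : ℕ) : (ishArr N).Finite := by
  rw [ishArr_eq_image]
  exact Finset.finite_toSet _

lemma pr_sub_eq_iff {N : ℕ} {i j i' j' : Fin N} (hij : i ≠ j) (hij' : i' ≠ j')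
    (h : (pr i - pr j : (Fin N → ℝ) →ₗ[ℝ] ℝ) = pr i' - pr j') : i = i' ∧ j = j' := by
  have h1 : ∀ u : Fin N → ℝ, u i - u j = u i' - u j' := by
    intro u
    have := DFunLike.congr_fun h u
    simpa [pr] using this
  constructor
  · by_contra hne
    have h2 := h1 (Pi.single i 1)
    rw [Pi.single_apply, Pi.single_apply, Pi.single_apply, Pi.single_apply] at h2
    rw [if_pos rfl, if_neg (fun hh : j = i => hij hh.symm),
      if_neg (fun hh : i' = i => hne hh.symm)] at h2
    split_ifs at h2 <;> norm_num at h2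
  · by_contra hne
    have h2 := h1 (Pi.single j 1)
    rw [Pi.single_apply, Pi.single_apply, Pi.single_apply, Pi.single_apply] at h2
    rw [if_neg (fun hh : i = j => hij hh), if_pos rfl,
      if_neg (fun hh : j' = j => hne hh.symm)] at h2
    split_ifs at h2 <;> norm_num at h2

lemma enc_injOn {N : ℕ} {x y : Fin N × Fin N × Bool} (hx : x ∈ idxSet N) (hy : y ∈ idxSet N)
    (h : enc x = enc y) : x = y := by
  obtain ⟨i, j, b⟩ := x
  obtain ⟨i', j', b'⟩ := y
  simp only [idxSet, Finset.mem_filter, Finset.mem_univ, true_and] at hx hy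
  cases b <;> cases b' <;> simp only [enc, if_true, if_false, Prod.mk.injEq, Bool.false_eq_true,
    ite_false, ite_true] at h
  · obtain ⟨hf, _⟩ := h
    obtain ⟨h1, h2⟩ := pr_sub_eq_iff (ne_of_lt hx) (ne_of_lt hy) hf
    simp [h1, h2]
  · exfalso
    have := h.2
    have : ((i'.1:ℝ) + 1) = 0 := this.symm
    have hpos : (0:ℝ) < (i'.1:ℝ) + 1 := by positivity
    linarith
  · exfalso
    have : ((i.1:ℝ) + 1) = 0 := h.2
    have hpos : (0:ℝ) < (i.1:ℝ) + 1 := by positivity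
    linarith
  · obtain ⟨hf, hc⟩ := h
    have hii : i = i' := by
      have : (i.1 : ℝ) = i'.1 := by linarith
      exact Fin.ext (by exact_mod_cast this)
    have hjj : j = j' := by
      have h0j : (⟨0, i.pos⟩ : Fin N) ≠ j := by
        intro hh
        have : (0:ℕ) = j.1 := congrArg Fin.val hh
        have := hx
        omega
      have h0j' : (⟨0, i'.pos⟩ : Fin N) ≠ j' := by
        intro hh
        have : (0:ℕ) = j'.1 := congrArg Fin.val hh
        have := hy
        omega
      exact (pr_sub_eq_iff h0j h0j' hf).2
    simp [hii, hjj]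


/-! ### base chamber -/

def basePt (N : ℕ) : Fin N → ℝ := fun i => if i.1 = 0 then 0 else ((N:ℝ) - i.1) / N

lemma basePt_apply_zero {N : ℕ} {i : Fin N} (hi : i.1 = 0) : basePt N i = 0 := if_pos hi

lemma basePt_apply_pos {N : ℕ} {i : Fin N} (hi : 0 < i.1) :
    basePt N i = ((N:ℝ) - i.1) / N := if_neg (by omega)

lemma basePt_sign_neg {N : ℕ} {i j : Fin N} (hij : i < j) (hi : i.1 = 0) :
    basePt N i - basePt N j < 0 := by
  rw [basePt_apply_zero hi, basePt_apply_pos (lt_of_le_of_lt (Nat.zero_le _) hij)]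
  have h1 : (j.1 : ℝ) < N := by exact_mod_cast j.isLt
  have h2 : (0:ℝ) < N := by
    have := j.pos
    exact_mod_cast this
  have := div_pos (by linarith : (0:ℝ) < (N:ℝ) - j.1) h2
  linarith

lemma basePt_sign_pos {N : ℕ} {i j : Fin N} (hij : i < j) (hi : 0 < i.1) :
    0 < basePt N i - basePt N j := by
  rw [basePt_apply_pos hi, basePt_apply_pos (lt_trans hi hij)]
  have h2 : (0:ℝ) < N := by
    have := j.pos
    exact_mod_cast this
  rw [div_sub_div_same]
  apply div_pos _ h2
  have : (i.1 : ℝ) < j.1 := by exact_mod_cast hij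
  linarith

lemma basePt_mem_compl (N : ℕ) : basePt N ∈ arrCompl (ishArr N) := by
  intro p hp
  rcases hp with ⟨i, j, hij, rfl⟩ | ⟨i, j, hij, rfl⟩
  · simp only [pr_sub_apply]
    by_cases hi : i.1 = 0
    · exact ne_of_lt (by simpa [sub_eq_zero] using basePt_sign_neg hij hi)
    · exact ne_of_gt (by simpa using basePt_sign_pos hij (Nat.pos_of_ne_zero hi))
  · simp only [pr_sub_apply]
    have h1 : basePt N (⟨0, i.pos⟩ : Fin N) = 0 := basePt_apply_zero rfl
    have hlt : (⟨0, i.pos⟩ : Fin N) < j := by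
      have : 0 < j.1 := lt_of_le_of_lt (Nat.zero_le _) hij
      exact this
    have h2 := basePt_sign_neg hlt rfl
    have h3 : (0:ℝ) < (i.1:ℝ) + 1 := by positivity
    intro he
    rw [he] at h2
    linarith

lemma base_set_eq {N : ℕ} (hN : 2 ≤ N) (h0 : 0 < N) (hN1 : N - 1 < N) :
    {v : Fin N → ℝ | v ⟨0, h0⟩ < v ⟨N-1, hN1⟩ ∧
        ∀ i j : Fin N, 0 < (i:ℕ) → i < j → v j < v i} = cell (ishArr N) (basePt N) := by
  ext w
  simp only [Set.mem_setOf_eq]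
  constructor
  · rintro ⟨hw1, hw2⟩
    have hkey : ∀ j : Fin N, 0 < j.1 → w ⟨0, h0⟩ < w j := by
      intro j hj
      rcases Nat.lt_or_ge j.1 (N-1) with h | h
      · have hjlt : j < (⟨N-1, hN1⟩ : Fin N) := h
        exact lt_trans hw1 (hw2 j ⟨N-1, hN1⟩ hj hjlt)
      · have : j = ⟨N-1, hN1⟩ := Fin.ext (show j.1 = N-1 by have := j.isLt; omega)
        rw [this]
        exact hw1
    intro p hp
    rcases hp with ⟨i, j, hij, rfl⟩ | ⟨i, j, hij, rfl⟩
    · simp only [pr_sub_apply]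
      by_cases hi : i.1 = 0
      · have hieq : i = ⟨0, h0⟩ := Fin.ext hi
        have hwj : w i - w j < 0 := by
          rw [hieq]
          have := hkey j (lt_of_le_of_lt (Nat.zero_le i.1) hij)
          linarith
        have hbj := basePt_sign_neg hij hi
        exact ⟨iff_of_true hwj hbj, iff_of_false (by linarith) (by linarith)⟩
      · have hi' : 0 < i.1 := Nat.pos_of_ne_zero hi
        have hwj : 0 < w i - w j := by
          have := hw2 i j hi' hij
          linarith
        have hbj := basePt_sign_pos hij hi'
        exact ⟨iff_of_false (by linarith) (by linarith), iff_of_true hwj hbj⟩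
    · simp only [pr_sub_apply]
      have hj : 0 < j.1 := lt_of_le_of_lt (Nat.zero_le _) hij
      have hw0 : w (⟨0, i.pos⟩ : Fin N) - w j < 0 := by
        have := hkey j hj
        have he : (⟨0, i.pos⟩ : Fin N) = ⟨0, h0⟩ := rfl
        rw [he]
        linarith
      have hb0 : basePt N (⟨0, i.pos⟩ : Fin N) - basePt N j < 0 := basePt_sign_neg (by exact hj) rfl
      have h3 : (0:ℝ) < (i.1:ℝ) + 1 := by positivity
      exact ⟨iff_of_true (by linarith) (by linarith), iff_of_false (by linarith) (by linarith)⟩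
  · intro hw
    constructor
    · have hlt : (⟨0, h0⟩ : Fin N) < (⟨N-1, hN1⟩ : Fin N) := by
        show (0:ℕ) < N-1
        omega
      have h := (hw _ (mem_ishArr_braid hlt)).1
      simp only [pr_sub_apply] at h
      have hb := basePt_sign_neg hlt rfl
      have := h.2 (by linarith)
      linarith
    · intro i j hi hij
      have h := (hw _ (mem_ishArr_braid hij)).2
      simp only [pr_sub_apply] at h
      have hb := basePt_sign_pos hij hi
      have := h.2 (by linarith)
      linarith


/-! ### separation count -/

lemma separates_cell_iff {A : Set (((Fin n → ℝ) →ₗ[ℝ] ℝ) × ℝ)} {vB v : Fin n → ℝ}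
    {p : ((Fin n → ℝ) →ₗ[ℝ] ℝ) × ℝ} (hp : p ∈ A) :
    Separates p (cell A vB) (cell A v) ↔
      ((p.1 vB < p.2 ∧ p.2 < p.1 v) ∨ (p.2 < p.1 vB ∧ p.1 v < p.2)) := by
  constructor
  · rintro (⟨h1, h2⟩ | ⟨h1, h2⟩)
    · exact Or.inl ⟨h1 vB (mem_cell_self A vB), h2 v (mem_cell_self A v)⟩
    · exact Or.inr ⟨h1 vB (mem_cell_self A vB), h2 v (mem_cell_self A v)⟩
  · rintro (⟨h1, h2⟩ | ⟨h1, h2⟩)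
    · exact Or.inl ⟨fun w hw => ((hw p hp).1).2 h1, fun w hw => ((hw p hp).2).2 h2⟩
    · exact Or.inr ⟨fun w hw => ((hw p hp).2).2 h1, fun w hw => ((hw p hp).1).2 h2⟩

lemma cstat_split (v : Fin n → ℝ) (j : Fin n) :
    cstat v j = (if (0:ℝ) < zf v j then 1 else 0)
      + (Finset.univ.filter (fun i : Fin n => i < j ∧ ((i.1:ℝ)+1) < zf v j)).card := by
  have h1 : cstat v j = ∑ s ∈ Finset.range (j.1+1), if ((s:ℕ):ℝ) < zf v j then 1 else 0 :=
    Finset.card_filter _ _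
  rw [h1, Finset.sum_range_succ']
  rw [add_comm]
  congr 1
  · simp
  rw [Finset.card_filter]
  have h2 : ∀ i : Fin n, (if (i < j ∧ ((i.1:ℝ)+1) < zf v j) then (1:ℕ) else 0)
      = (fun a : ℕ => if (a < j.1 ∧ ((a:ℝ)+1) < zf v j) then (1:ℕ) else 0) i.1 := by
    intro i
    simp only [Fin.lt_def]
  rw [Finset.sum_congr rfl (fun i _ => h2 i),
    Fin.sum_univ_eq_sum_range (fun a : ℕ => if (a < j.1 ∧ ((a:ℝ)+1) < zf v j) then (1:ℕ) else 0) n]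
  rw [← Finset.sum_subset (Finset.range_subset_range.2 j.isLt.le)
    (fun a _ ha => by
      rw [Finset.mem_range] at ha
      rw [if_neg]
      rintro ⟨h, _⟩
      omega)]
  apply Finset.sum_congr rfl
  intro a ha
  rw [Finset.mem_range] at ha
  have hc : ((a+1:ℕ):ℝ) = (a:ℝ)+1 := by push_cast; ring
  rw [hc]
  by_cases hzf : ((a:ℝ)+1) < zf v j
  · rw [if_pos hzf, if_pos ⟨ha, hzf⟩]
  · rw [if_neg hzf, if_neg (fun hh => hzf hh.2)]


lemma sepCount_cell (N : ℕ) (hN : 0 < N) {v : Fin N → ℝ} (hv : v ∈ arrCompl (ishArr N)) :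
    sepCount (ishArr N) (cell (ishArr N) (basePt N)) (cell (ishArr N) v)
      = ∑ j ∈ Finset.univ.filter (fun j : Fin N => 0 < j.1), mstat v j := by
  set Bc := cell (ishArr N) (basePt N) with hBc
  set Cc := cell (ishArr N) v with hCc
  have hset : {p ∈ ishArr N | Separates p Bc Cc}
      = ↑(((idxSet N).image enc).filter (fun p => Separates p Bc Cc)) := by
    rw [ishArr_eq_image, Finset.coe_filter]
    rfl
  rw [sepCount, hset, Set.ncard_coe_finset]
  rw [Finset.filter_image]
  rw [Finset.card_image_of_injOn (fun x hx y hy h =>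
    enc_injOn (Finset.mem_of_mem_filter x (Finset.mem_coe.1 hx))
      (Finset.mem_of_mem_filter y (Finset.mem_coe.1 hy)) h)]
  have hpred : (idxSet N).filter (fun x => Separates (enc x) Bc Cc)
      = (idxSet N).filter (fun x => if x.2.2 then ((x.1.1:ℝ)+1) < zf v x.2.1
          else (if x.1.1 = 0 then (0:ℝ) < zf v x.2.1 else zf v x.2.1 < zf v x.1)) := by
    apply Finset.filter_congr
    rintro ⟨i, j, b⟩ hx
    simp only [idxSet, Finset.mem_filter, Finset.mem_univ, true_and] at hx
    cases b
    · simp only [enc, Bool.false_eq_true, if_false]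
      rw [hBc, hCc, separates_cell_iff (mem_ishArr_braid hx)]
      simp only [pr_sub_apply]
      by_cases hi : i.1 = 0
      · rw [if_pos hi]
        have hb := basePt_sign_neg hx hi
        have hvij : v i - v j = zf v j := by
          have hieq : i = ⟨0, j.pos⟩ := Fin.ext hi
          rw [hieq]; rfl
        constructor
        · rintro (⟨_, h⟩ | ⟨h, _⟩)
          · rwa [hvij] at h
          · linarith
        · intro h
          exact Or.inl ⟨by linarith, by rwa [hvij]⟩
      · rw [if_neg hi]
        have hb := basePt_sign_pos hx (Nat.pos_of_ne_zero hi)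
        have hvij : v i - v j = zf v j - zf v i := sub_zf v i j
        constructor
        · rintro (⟨h, _⟩ | ⟨_, h⟩)
          · linarith
          · rw [hvij] at h
            linarith
        · intro h
          exact Or.inr ⟨by linarith, by rw [hvij]; linarith⟩
    · simp only [enc, if_true]
      rw [hBc, hCc, separates_cell_iff (mem_ishArr_thresh hx)]
      simp only [pr_sub_apply]
      have hj0 : (⟨0, i.pos⟩ : Fin N) < j := lt_of_le_of_lt (Nat.zero_le i.1) hx
      have hb := basePt_sign_neg hj0 rfl
      have h3 : (0:ℝ) < (i.1:ℝ) + 1 := by positivity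
      have hvj : v (⟨0, i.pos⟩ : Fin N) - v j = zf v j := rfl
      constructor
      · rintro (⟨_, h⟩ | ⟨h, _⟩)
        · rwa [hvj] at h
        · linarith
      · intro h
        exact Or.inl ⟨by linarith, by rwa [hvj]⟩
  rw [hpred, idxSet, Finset.filter_filter, Finset.card_filter]
  simp only [Fintype.sum_prod_type, Fintype.sum_bool, eq_self_iff_true, if_true,
    Bool.false_eq_true, if_false, Finset.sum_add_distrib]
  -- now two double sums
  have hT : (∑ i : Fin N, ∑ j : Fin N,
        if (i < j ∧ ((i.1:ℝ)+1) < zf v j) then (1:ℕ) else 0)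
      = ∑ j ∈ Finset.univ.filter (fun j : Fin N => 0 < j.1),
          (Finset.univ.filter (fun i : Fin N => i < j ∧ ((i.1:ℝ)+1) < zf v j)).card := by
    rw [Finset.sum_comm]
    have h1 : ∀ j : Fin N, (∑ i : Fin N,
        if (i < j ∧ ((i.1:ℝ)+1) < zf v j) then (1:ℕ) else 0)
        = (Finset.univ.filter (fun i : Fin N => i < j ∧ ((i.1:ℝ)+1) < zf v j)).card :=
      fun j => (Finset.card_filter _ _).symm
    rw [Finset.sum_congr rfl (fun j _ => h1 j)]
    refine (Finset.sum_filter_of_ne ?_).symm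
    intro j _ hne
    have : (Finset.univ.filter (fun i : Fin N => i < j ∧ ((i.1:ℝ)+1) < zf v j)).Nonempty := by
      rw [← Finset.card_pos]
      omega
    obtain ⟨i, hi⟩ := this
    rw [Finset.mem_filter] at hi
    exact lt_of_le_of_lt (Nat.zero_le i.1) hi.2.1
  have hF : (∑ i : Fin N, ∑ j : Fin N,
        if (i < j ∧ (if i.1 = 0 then (0:ℝ) < zf v j else zf v j < zf v i)) then (1:ℕ) else 0)
      = (∑ j ∈ Finset.univ.filter (fun j : Fin N => 0 < j.1),
          if (0:ℝ) < zf v j then (1:ℕ) else 0)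
        + ∑ i ∈ Finset.univ.filter (fun i : Fin N => 0 < i.1), (bSet v i).card := by
    rw [← Finset.sum_filter_add_sum_filter_not Finset.univ (fun i : Fin N => i.1 = 0)]
    congr 1
    · have hfil : Finset.univ.filter (fun i : Fin N => i.1 = 0) = {(⟨0, hN⟩ : Fin N)} := by
        ext i
        simp only [Finset.mem_filter, Finset.mem_univ, true_and, Finset.mem_singleton]
        constructor
        · intro h
          exact Fin.ext h
        · intro h
          rw [h]
      rw [hfil, Finset.sum_singleton, Finset.sum_filter]
      apply Finset.sum_congr rfl
      intro j _
      have hlt : ((⟨0, hN⟩ : Fin N) < j) ↔ 0 < j.1 := Iff.rfl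
      by_cases h1 : 0 < j.1 <;> by_cases h2 : (0:ℝ) < zf v j
      · rw [if_pos ⟨hlt.2 h1, by rw [if_pos rfl]; exact h2⟩, if_pos h1, if_pos h2]
      · rw [if_neg, if_pos h1, if_neg h2]
        rintro ⟨_, hh⟩
        rw [if_pos rfl] at hh
        exact h2 hh
      · rw [if_neg, if_neg h1]
        rintro ⟨hh, _⟩
        exact h1 (hlt.1 hh)
      · rw [if_neg, if_neg h1]
        rintro ⟨hh, _⟩
        exact h1 (hlt.1 hh)
    · have hfil2 : Finset.univ.filter (fun i : Fin N => ¬ i.1 = 0)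
          = Finset.univ.filter (fun i : Fin N => 0 < i.1) := by
        apply Finset.filter_congr
        intro i _
        omega
      rw [hfil2]
      apply Finset.sum_congr rfl
      intro i hi
      rw [Finset.mem_filter] at hi
      have hstep : ∀ j : Fin N, (if (i < j ∧ (if i.1 = 0 then (0:ℝ) < zf v j
            else zf v j < zf v i)) then (1:ℕ) else 0)
          = if (i < j ∧ zf v j < zf v i) then 1 else 0 := by
        intro j
        have hne : ¬ i.1 = 0 := by omega
        simp only [hne, if_false]
      rw [Finset.sum_congr rfl (fun j _ => hstep j)]
      exact (Finset.card_filter _ _).symm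
  rw [hT, hF]
  -- right-hand side
  have hR : (∑ j ∈ Finset.univ.filter (fun j : Fin N => 0 < j.1), mstat v j)
      = (∑ j ∈ Finset.univ.filter (fun j : Fin N => 0 < j.1),
          if (0:ℝ) < zf v j then (1:ℕ) else 0)
        + ((∑ j ∈ Finset.univ.filter (fun j : Fin N => 0 < j.1),
            (Finset.univ.filter (fun i : Fin N => i < j ∧ ((i.1:ℝ)+1) < zf v j)).card)
          + ∑ i ∈ Finset.univ.filter (fun i : Fin N => 0 < i.1), (bSet v i).card) := by
    have h1 : ∀ j : Fin N, mstat v j = (if (0:ℝ) < zf v j then (1:ℕ) else 0)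
        + ((Finset.univ.filter (fun i : Fin N => i < j ∧ ((i.1:ℝ)+1) < zf v j)).card
          + (bSet v j).card) := by
      intro j
      rw [mstat, cstat_split]
      ring
    rw [Finset.sum_congr rfl (fun j _ => h1 j), Finset.sum_add_distrib, Finset.sum_add_distrib]
  rw [hR]
  ring


/-! ### representatives and the final count -/

def nuf (N : ℕ) (μ : Fin (N-1) → Fin (N+1)) : ℕ → ℕ :=
  fun a => if h : 1 ≤ a ∧ a ≤ N-1 then (μ ⟨a-1, by omega⟩).1 else 0

lemma nuf_le (N : ℕ) (μ : Fin (N-1) → Fin (N+1)) : ∀ a, nuf N μ a ≤ N := by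
  intro a
  rw [nuf]
  split
  · exact Nat.lt_succ_iff.1 (Fin.isLt _)
  · exact Nat.zero_le _

noncomputable def rep (N : ℕ) (μ : Fin (N-1) → Fin (N+1)) : Fin N → ℝ := pointOf N (nuf N μ)

lemma rep_mem_compl (N : ℕ) (μ : Fin (N-1) → Fin (N+1)) : rep N μ ∈ arrCompl (ishArr N) :=
  pointOf_mem_compl N (nuf N μ)

lemma mstat_rep (N : ℕ) (μ : Fin (N-1) → Fin (N+1)) (j : Fin N) (hj : 0 < j.1) :
    mstat (rep N μ) j = (μ ⟨j.1 - 1, by have := j.isLt; omega⟩).1 := by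
  rw [rep, mstat_pointOf N _ (nuf_le N μ) j hj, nuf]
  rw [dif_pos ⟨hj, by have := j.isLt; omega⟩]

lemma msum_rep (N : ℕ) (μ : Fin (N-1) → Fin (N+1)) :
    (∑ j ∈ Finset.univ.filter (fun j : Fin N => 0 < j.1), mstat (rep N μ) j)
      = ∑ i : Fin (N-1), (μ i).1 := by
  refine Finset.sum_bij' (fun (j : Fin N) (hj : j ∈ Finset.univ.filter (fun j : Fin N => 0 < j.1))
      => (⟨j.1 - 1, by have := j.isLt; have := (Finset.mem_filter.1 hj).2; omega⟩ : Fin (N-1)))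
    (fun (i : Fin (N-1)) _ => (⟨i.1 + 1, by have := i.isLt; omega⟩ : Fin N))
    ?_ ?_ ?_ ?_ ?_
  · intro a ha
    exact Finset.mem_univ _
  · intro i _
    rw [Finset.mem_filter]
    exact ⟨Finset.mem_univ _, Nat.succ_pos _⟩
  · intro a ha
    have := (Finset.mem_filter.1 ha).2
    apply Fin.ext
    show a.1 - 1 + 1 = a.1
    omega
  · intro i _
    apply Fin.ext
    show i.1 + 1 - 1 = i.1
    omega
  · intro a ha
    rw [mstat_rep N μ a (Finset.mem_filter.1 ha).2]


lemma chambers_eq_image (N : ℕ) (hN : 0 < N) :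
    chambers (ishArr N) = ↑((Finset.univ : Finset (Fin (N-1) → Fin (N+1))).image
      (fun μ => cell (ishArr N) (rep N μ))) := by
  rw [chambers_eq_cells (ishArr_finite N)]
  ext C
  simp only [Set.mem_image, Finset.coe_image, Finset.mem_coe, Finset.mem_univ, Set.mem_setOf_eq,
    Set.image_univ, Set.mem_range]
  constructor
  · rintro ⟨v, hv, rfl⟩
    refine ⟨fun i => ⟨mstat v ⟨i.1+1, by have := i.isLt; omega⟩,
      Nat.lt_succ_iff.2 (mstat_le hv _ (Nat.succ_pos _))⟩, ?_⟩
    have hmm : ∀ j : Fin N, 0 < j.1 → mstat v j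
        = mstat (rep N (fun i => ⟨mstat v ⟨i.1+1, by have := i.isLt; omega⟩,
            Nat.lt_succ_iff.2 (mstat_le hv _ (Nat.succ_pos _))⟩)) j := by
      intro j hj
      rw [mstat_rep N _ j hj]
      show mstat v j = mstat v ⟨j.1 - 1 + 1, _⟩
      congr 1
      exact Fin.ext (by show j.1 = j.1 - 1 + 1; omega)
    have hw := mem_cell_of_mstat_eq hv (rep_mem_compl N _) hmm
    exact ⟨trivial, cell_eq_of_mem hw⟩
  · rintro ⟨μ, _, rfl⟩
    exact ⟨rep N μ, rep_mem_compl N μ, rfl⟩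

lemma rep_cell_inj (N : ℕ) {μ μ' : Fin (N-1) → Fin (N+1)}
    (h : cell (ishArr N) (rep N μ) = cell (ishArr N) (rep N μ')) : μ = μ' := by
  have hmem : rep N μ' ∈ cell (ishArr N) (rep N μ) := h ▸ mem_cell_self _ _
  have hm := mstat_eq_of_mem_cell hmem
  funext i
  have hlt : i.1 + 1 < N := by have := i.isLt; omega
  have hj : 0 < (⟨i.1+1, hlt⟩ : Fin N).1 := Nat.succ_pos _
  have hval := hm _ hj
  rw [mstat_rep N μ _ hj, mstat_rep N μ' _ hj] at hval
  have hidx : (⟨(⟨i.1+1, hlt⟩ : Fin N).1 - 1, by have := i.isLt; omega⟩ : Fin (N-1)) = i :=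
    Fin.ext (by show i.1 + 1 - 1 = i.1; omega)
  rw [hidx] at hval
  exact Fin.ext hval

end Ish

/-- Wall-crossing formula for the Ish arrangement with base chamber
`B = {x₁ < x_ℓ < x_{ℓ-1} < ⋯ < x₂}`:
`∑_C t^{d(B,C)} = (1 + t + t² + ⋯ + t^ℓ)^{ℓ-1}`. -/
theorem ish_wall_crossing (ℓ : ℕ) (hl : 1 ≤ ℓ) :
    ∀ t : ℝ,
      (∑ᶠ C ∈ chambers (ishArr ℓ),
          t ^ sepCount (ishArr ℓ)
            {v : Fin ℓ → ℝ | v ⟨0, by omega⟩ < v ⟨ℓ - 1, by omega⟩ ∧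
              ∀ i j : Fin ℓ, 0 < (i : ℕ) → i < j → v j < v i}
            C) =
        (∑ m ∈ Finset.range (ℓ + 1), t ^ m) ^ (ℓ - 1) := by
  intro t
  classical
  by_cases hl2 : 2 ≤ ℓ
  · have h0 : 0 < ℓ := by omega
    have hN1 : ℓ - 1 < ℓ := by omega
    rw [Ish.base_set_eq hl2 h0 hN1]
    rw [Ish.chambers_eq_image ℓ h0, finsum_mem_coe_finset]
    rw [Finset.sum_image (fun μ _ μ' _ h => Ish.rep_cell_inj ℓ h)]
    have hsep : ∀ μ : Fin (ℓ-1) → Fin (ℓ+1),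
        sepCount (ishArr ℓ) (Ish.cell (ishArr ℓ) (Ish.basePt ℓ))
          (Ish.cell (ishArr ℓ) (Ish.rep ℓ μ)) = ∑ i : Fin (ℓ-1), (μ i).1 := by
      intro μ
      rw [Ish.sepCount_cell ℓ h0 (Ish.rep_mem_compl ℓ μ), Ish.msum_rep]
    rw [Finset.sum_congr rfl (fun μ _ => by rw [hsep μ])]
    have hpow : ∀ μ : Fin (ℓ-1) → Fin (ℓ+1),
        t ^ (∑ i : Fin (ℓ-1), (μ i).1) = ∏ i : Fin (ℓ-1), t ^ (μ i).1 := by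
      intro μ
      rw [Finset.prod_pow_eq_pow_sum]
    rw [Finset.sum_congr rfl (fun μ _ => hpow μ)]
    rw [← Fintype.piFinset_univ,
      ← Finset.prod_univ_sum (fun _ : Fin (ℓ-1) => (Finset.univ : Finset (Fin (ℓ+1))))
        (fun _ x => t ^ (x : ℕ))]
    have hone : (∑ j : Fin (ℓ+1), t ^ (j : ℕ)) = ∑ m ∈ Finset.range (ℓ+1), t ^ m :=
      Fin.sum_univ_eq_sum_range (fun m => t ^ m) (ℓ+1)
    rw [Finset.prod_congr rfl (fun i _ => hone), Finset.prod_const, Finset.card_univ,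
      Fintype.card_fin]
  · have hℓ : ℓ = 1 := by omega
    subst hℓ
    have hempty : ishArr 1 = ∅ := by
      ext p
      simp only [ishArr, Set.mem_union, Set.mem_setOf_eq, Set.mem_empty_iff_false, iff_false]
      rintro (⟨i, j, hij, _⟩ | ⟨i, j, hij, _⟩) <;>
        · have hi := i.isLt
          have hj := j.isLt
          have := (Fin.lt_def).1 hij
          omega
    rw [hempty]
    have hcompl : arrCompl (∅ : Set (((Fin 1 → ℝ) →ₗ[ℝ] ℝ) × ℝ)) = Set.univ := by
      ext v
      simp [arrCompl]
    have hch : chambers (∅ : Set (((Fin 1 → ℝ) →ₗ[ℝ] ℝ) × ℝ)) = {Set.univ} := by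
      ext C
      simp only [chambers, Set.mem_setOf_eq, hcompl, Set.mem_univ, true_and,
        Set.mem_singleton_iff]
      constructor
      · rintro ⟨x, rfl⟩
        rw [connectedComponentIn_univ, PreconnectedSpace.connectedComponent_eq_univ]
      · intro h
        refine ⟨fun _ => 0, ?_⟩
        rw [connectedComponentIn_univ, PreconnectedSpace.connectedComponent_eq_univ, h]
    rw [hch, finsum_mem_singleton]
    have hsep0 : sepCount (∅ : Set (((Fin 1 → ℝ) →ₗ[ℝ] ℝ) × ℝ))
        {v : Fin 1 → ℝ | v ⟨0, by omega⟩ < v ⟨1 - 1, by omega⟩ ∧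
          ∀ i j : Fin 1, 0 < (i : ℕ) → i < j → v j < v i} Set.univ = 0 := by
      rw [sepCount]
      have h : ∀ (B : Set (Fin 1 → ℝ)),
          {p ∈ (∅ : Set (((Fin 1 → ℝ) →ₗ[ℝ] ℝ) × ℝ)) | Separates p B Set.univ} = ∅ :=
        fun B => Set.eq_empty_of_subset_empty (fun p hp => hp.1)
      rw [h, Set.ncard_empty]
    rw [hsep0, pow_zero]
    norm_num

end
end

section
/- For a subgraph G ⊆ K_ℓ, N_G is a nest if and only if there exists a permutation w of {1,…,ℓ} such that w^{-1}G ⊆ K_ℓ (i.e., (i,j) ∈ w^{-1}G implies i < j) and w^{-1}G satisfies: whenever 1 ≤ i < j < k ≤ ℓ and (i,j) ∈ w^{-1}G, then (i,k) ∈ w^{-1}G. -/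
/-- `N` (a tuple of sets indexed by `Fin n`) is a nest: after a permutation, the sets
form a chain under inclusion. -/
def IsNest {n : ℕ} {α : Type*} (N : Fin n → Set α) : Prop :=
  ∃ w : Equiv.Perm (Fin n), ∀ i j : Fin n, i ≤ j → N (w i) ⊆ N (w j)

/-- `N_G`: for `j : Fin n` (representing the 1-based column index `j+2`), the set
`{0} ∪ {i : (i, j) ∈ G}` of 1-based row indices (edge `(i, j.succ)` in zero-based
coordinates contributes the 1-based constant `i+1`).  Here `ℓ = n+1` and `G` is a set
of edges of the complete graph on `{1, …, ℓ}` in zero-based indexing. -/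
def NG {n : ℕ} (G : Set (Fin (n + 1) × Fin (n + 1))) (j : Fin n) : Set ℕ :=
  {0} ∪ {m | ∃ i : Fin (n + 1), (i, j.succ) ∈ G ∧ m = (i : ℕ) + 1}

/-- Sorting lemma: a pairwise-comparable finite family of sets can be sorted by a
permutation, which moreover respects strict inclusions. -/
lemma exists_sort_of_chain {m : ℕ} {α : Type*} (N : Fin m → Set α)
    (h : ∀ i j, N i ⊆ N j ∨ N j ⊆ N i) :
    ∃ w : Equiv.Perm (Fin m),
      (∀ i j : Fin m, i ≤ j → N (w i) ⊆ N (w j)) ∧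
      (∀ a b : Fin m, N a ⊆ N b → ¬ N b ⊆ N a → w.symm a < w.symm b) := by
  classical
  set f : Fin m → ℕ := fun j => (Finset.univ.filter fun k => N k ⊆ N j).card with hf
  have hstrict : ∀ a b, N a ⊆ N b → ¬ N b ⊆ N a → f a < f b := by
    intro a b hab hba
    apply Finset.card_lt_card
    constructor
    · intro k hk
      simp only [Finset.mem_filter] at *
      exact ⟨hk.1, hk.2.trans hab⟩
    · intro hsub
      have hb : b ∈ Finset.univ.filter fun k => N k ⊆ N b := by simp
      have := hsub hb
      simp only [Finset.mem_filter] at this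
      exact hba this.2
  refine ⟨Tuple.sort f, ?_, ?_⟩
  · intro i j hij
    have hm : f ((Tuple.sort f) i) ≤ f ((Tuple.sort f) j) := Tuple.monotone_sort f hij
    rcases h ((Tuple.sort f) i) ((Tuple.sort f) j) with h1 | h1
    · exact h1
    · by_cases h2 : N ((Tuple.sort f) i) ⊆ N ((Tuple.sort f) j)
      · exact h2
      · exact absurd hm (not_le.mpr (hstrict _ _ h1 h2))
  · intro a b hab hba
    by_contra hle
    push_neg at hle
    have hm : f ((Tuple.sort f) ((Tuple.sort f).symm b))
        ≤ f ((Tuple.sort f) ((Tuple.sort f).symm a)) := Tuple.monotone_sort f hle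
    simp only [Equiv.apply_symm_apply] at hm
    exact absurd hm (not_le.mpr (hstrict a b hab hba))

/-- `N_G` is a nest iff there is a permutation `w` of `{1,…,ℓ}` such that
`w⁻¹G ⊆ K_ℓ` (i.e. `(i,j) ∈ w⁻¹G` implies `i < j`) and whenever `i < j < k` and
`(i,j) ∈ w⁻¹G`, also `(i,k) ∈ w⁻¹G`.  Here `w⁻¹G = {(w⁻¹ a, w⁻¹ b) : (a,b) ∈ G}`,
so `(i,j) ∈ w⁻¹G ↔ (w i, w j) ∈ G`. -/
theorem NG_nest_iff_perm (n : ℕ) (G : Set (Fin (n + 1) × Fin (n + 1)))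
    (hG : ∀ e ∈ G, e.1 < e.2) :
    IsNest (NG G) ↔
      ∃ w : Equiv.Perm (Fin (n + 1)),
        (∀ e ∈ G, w.symm e.1 < w.symm e.2) ∧
        (∀ i j k : Fin (n + 1), i < j → j < k →
          (w i, w j) ∈ G → (w i, w k) ∈ G) := by
  classical
  set C : Fin (n + 1) → Set (Fin (n + 1)) := fun j => {i | (i, j) ∈ G} with hCdef
  have hC0 : ∀ i, i ∉ C 0 := by
    intro i hi
    exact absurd (hG _ hi) (Fin.not_lt_zero i)
  have hCsub : ∀ j1 j2 : Fin n, NG G j1 ⊆ NG G j2 ↔ C j1.succ ⊆ C j2.succ := by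
    intro j1 j2
    constructor
    · intro h i hi
      have hmem : (i : ℕ) + 1 ∈ NG G j2 := h (Or.inr ⟨i, hi, rfl⟩)
      rcases hmem with h0 | ⟨i', hi', he⟩
      · exact absurd h0 (by simp)
      · have : i = i' := Fin.ext (by omega)
        rw [this]; exact hi'
    · intro h m hm
      rcases hm with h0 | ⟨i, hi, he⟩
      · exact Or.inl h0
      · exact Or.inr ⟨i, h hi, he⟩
  constructor
  · rintro ⟨σ, hσ⟩
    -- NG is pairwise comparable
    have hNGcomp : ∀ j1 j2 : Fin n, NG G j1 ⊆ NG G j2 ∨ NG G j2 ⊆ NG G j1 := by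
      intro j1 j2
      rcases le_total (σ.symm j1) (σ.symm j2) with hle | hle
      · left; have := hσ _ _ hle; simpa using this
      · right; have := hσ _ _ hle; simpa using this
    -- hence the columns are pairwise comparable
    have hcomp : ∀ a b : Fin (n + 1), C a ⊆ C b ∨ C b ⊆ C a := by
      intro a b
      rcases eq_or_ne a 0 with rfl | ha
      · left; intro i hi; exact absurd hi (hC0 i)
      rcases eq_or_ne b 0 with rfl | hb
      · right; intro i hi; exact absurd hi (hC0 i)
      have ha' : (a.pred ha).succ = a := Fin.succ_pred a ha
      have hb' : (b.pred hb).succ = b := Fin.succ_pred b hb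
      rcases hNGcomp (a.pred ha) (b.pred hb) with h | h
      · left; have := (hCsub _ _).mp h; rwa [ha', hb'] at this
      · right; have := (hCsub _ _).mp h; rwa [ha', hb'] at this
    obtain ⟨w, hw1, hw2⟩ := exists_sort_of_chain C hcomp
    refine ⟨w, ?_, ?_⟩
    · intro e he
      have hnot : ¬ C e.2 ⊆ C e.1 := by
        intro h
        have : e.1 ∈ C e.1 := h he
        exact absurd (hG _ this) (lt_irrefl _)
      have hsub : C e.1 ⊆ C e.2 := by
        rcases hcomp e.1 e.2 with h | h
        · exact h
        · exact absurd h hnot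
      exact hw2 _ _ hsub hnot
    · intro i j k hij hjk hmem
      exact hw1 j k hjk.le hmem
  · rintro ⟨w, hwa, hwb⟩
    have hkey : ∀ a b : Fin (n + 1), w.symm a ≤ w.symm b → C a ⊆ C b := by
      intro a b hpq r hr
      have hlt : w.symm r < w.symm a := hwa (r, a) hr
      rcases eq_or_lt_of_le hpq with heq | hlt2
      · have hab : a = b := w.symm.injective heq
        rwa [hab] at hr
      · have := hwb (w.symm r) (w.symm a) (w.symm b) hlt hlt2 (by simpa using (show (r, a) ∈ G from hr))
        show (r, b) ∈ G; simpa using this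
    have hNGcomp : ∀ j1 j2 : Fin n, NG G j1 ⊆ NG G j2 ∨ NG G j2 ⊆ NG G j1 := by
      intro j1 j2
      rcases le_total (w.symm j1.succ) (w.symm j2.succ) with hle | hle
      · left; exact (hCsub _ _).mpr (hkey _ _ hle)
      · right; exact (hCsub _ _).mpr (hkey _ _ hle)
    obtain ⟨σ, hσ, -⟩ := exists_sort_of_chain (NG G) hNGcomp
    exact ⟨σ, hσ⟩
end
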